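/- arXiv:1902.09906 — 3 statements merged into one kernel-verified Lean document; each statement's English description precedes it below -/
import Mathlib

section
/- For a real symmetric matrix Ψ and a symmetric matrix R, the Fréchet derivative of the matrix exponential satisfies: d/dε exp(-Ψ + ε R)|_{ε=0} = Σ_{i,j} e^{-λ_i/2} e^{-λ_j/2} · h(λ_i - λ_j) · P_i R P_j, where h(x)=sinh(x/2)/(x/2) (h(0)=1), λ_i are the eigenvalues and P_i the spectral projectors of Ψ. -/
open Matrix

attribute [local instance] Matrix.frobeniusNormedAddCommGroup Matrix.frobeniusNormedSpace
attribute [local instance] Matrix.frobeniusNormedRing Matrix.frobeniusNormedAlgebra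

open Finset Nat in
private lemma term_eq_ne' (x y : ℝ) (hxy : x ≠ y) (k : ℕ) :
    (k ! : ℝ)⁻¹ * ∑ a ∈ Finset.range k, x ^ a * y ^ (k - 1 - a)
      = (x ^ k / (k ! : ℝ) - y ^ k / (k ! : ℝ)) * (x - y)⁻¹ := by
  have hd : x - y ≠ 0 := sub_ne_zero.2 hxy
  have hg := geom_sum₂_mul x y k
  have hthis : (∑ a ∈ Finset.range k, x ^ a * y ^ (k - 1 - a)) = (x ^ k - y ^ k) / (x - y) :=
    (eq_div_iff hd).2 hg
  rw [hthis]; ring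

open Finset Nat in
private lemma term_eq_eq' (x : ℝ) (k : ℕ) :
    (((k + 1)! : ℕ) : ℝ)⁻¹ * ∑ a ∈ Finset.range (k + 1), x ^ a * x ^ (k + 1 - 1 - a)
      = x ^ k / (k ! : ℝ) := by
  have hc : ∀ a ∈ Finset.range (k + 1), x ^ a * x ^ (k + 1 - 1 - a) = x ^ k := by
    intro a ha
    have hak : a ≤ k := Nat.lt_succ_iff.mp (Finset.mem_range.mp ha)
    rw [← pow_add]
    congr 1
    omega
  rw [Finset.sum_congr rfl hc, Finset.sum_const, Finset.card_range, nsmul_eq_mul,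
    Nat.factorial_succ]
  have h1 : (k ! : ℝ) ≠ 0 := Nat.cast_ne_zero.2 (Nat.factorial_ne_zero k)
  have h2 : ((k : ℝ) + 1) ≠ 0 := by positivity
  push_cast
  field_simp

open Finset Nat in
private lemma phi_summable' (x y : ℝ) :
    Summable (fun k : ℕ => (k ! : ℝ)⁻¹ * ∑ a ∈ Finset.range k, x ^ a * y ^ (k - 1 - a)) := by
  by_cases hxy : x = y
  · subst hxy
    rw [← summable_nat_add_iff 1]
    exact (Real.summable_pow_div_factorial x).congr (fun k => (term_eq_eq' x k).symm)
  · exact ((((Real.summable_pow_div_factorial x).sub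
      (Real.summable_pow_div_factorial y)).mul_right (x - y)⁻¹).congr
        (fun k => (term_eq_ne' x y hxy k).symm))

open Finset Nat in
private lemma phi_tsum' (x y : ℝ) :
    (∑' k : ℕ, (k ! : ℝ)⁻¹ * ∑ a ∈ Finset.range k, x ^ a * y ^ (k - 1 - a))
      = if x = y then Real.exp x else (Real.exp x - Real.exp y) / (x - y) := by
  have hexp : ∀ z : ℝ, Real.exp z = ∑' k : ℕ, z ^ k / (k ! : ℝ) := by
    intro z
    rw [Real.exp_eq_exp_ℝ, NormedSpace.exp_eq_tsum_div]
  by_cases hxy : x = y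
  · subst hxy
    rw [if_pos rfl, Summable.tsum_eq_zero_add (phi_summable' x x)]
    simp only [Nat.factorial_zero, Finset.range_zero, Finset.sum_empty, mul_zero, zero_add]
    rw [hexp x]
    exact tsum_congr (fun k => term_eq_eq' x k)
  · rw [if_neg hxy]
    calc (∑' k : ℕ, (k ! : ℝ)⁻¹ * ∑ a ∈ Finset.range k, x ^ a * y ^ (k - 1 - a))
        = ∑' k : ℕ, (x ^ k / (k ! : ℝ) - y ^ k / (k ! : ℝ)) * (x - y)⁻¹ :=
          tsum_congr (fun k => term_eq_ne' x y hxy k)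
      _ = (Real.exp x - Real.exp y) / (x - y) := by
          rw [tsum_mul_right,
            ((Real.summable_pow_div_factorial x).hasSum.sub
              (Real.summable_pow_div_factorial y).hasSum).tsum_eq, hexp x, hexp y,
            div_eq_mul_inv]

private lemma coeff_eq' (a b : ℝ) (h : ℝ → ℝ)
    (hh : ∀ x : ℝ, h x = if x = 0 then 1 else Real.sinh (x / 2) / (x / 2)) :
    (if -a = -b then Real.exp (-a) else (Real.exp (-a) - Real.exp (-b)) / (-a - -b))
      = Real.exp (-a / 2) * Real.exp (-b / 2) * h (a - b) := by
  by_cases hab : a = b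
  · subst hab
    rw [if_pos rfl, hh, if_pos (sub_self a), mul_one, ← Real.exp_add]
    congr 1; ring
  · have hne : -a ≠ -b := fun hc => hab (neg_injective hc)
    have hd : a - b ≠ 0 := sub_ne_zero.2 hab
    have hba : -a - -b ≠ 0 := by intro hc; apply hd; linarith [sub_eq_zero.mp hc]
    rw [if_neg hne, hh, if_neg hd, Real.sinh_eq]
    have hR : Real.exp (-a / 2) * Real.exp (-b / 2) *
        ((Real.exp ((a - b) / 2) - Real.exp (-((a - b) / 2))) / 2 / ((a - b) / 2))
        = (Real.exp (-b) - Real.exp (-a)) / (a - b) := by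
      rw [div_div, show (2 * ((a - b) / 2)) = a - b by ring, mul_div_assoc']
      congr 1
      rw [mul_sub]
      simp only [← Real.exp_add]
      rw [show -a / 2 + -b / 2 + (a - b) / 2 = -b by ring,
        show -a / 2 + -b / 2 + -((a - b) / 2) = -a by ring]
    rw [hR, div_eq_div_iff hba hd]
    ring

open Finset in
private lemma Pmul' {n : ℕ} {e : Fin n → (Fin n → ℝ)}
    (hON : ∀ i j, e i ⬝ᵥ e j = if i = j then 1 else 0) (i j : Fin n) :
    vecMulVec (e i) (e i) * vecMulVec (e j) (e j)
      = if i = j then vecMulVec (e i) (e i) else 0 := by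
  ext a b
  rw [Matrix.mul_apply]
  have hsum : (∑ k, vecMulVec (e i) (e i) a k * vecMulVec (e j) (e j) k b)
      = e i a * e j b * (e i ⬝ᵥ e j) := by
    rw [dotProduct, Finset.mul_sum]
    exact Finset.sum_congr rfl fun k _ => by simp [vecMulVec_apply]; ring
  rw [hsum, hON]
  by_cases hij : i = j
  · subst hij; simp [vecMulVec_apply]
  · simp [hij]

open Finset in
private lemma Psum' {n : ℕ} {e : Fin n → (Fin n → ℝ)}
    (hON : ∀ i j, e i ⬝ᵥ e j = if i = j then 1 else 0) :
    (∑ i, vecMulVec (e i) (e i)) = 1 := by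
  have hU : (Matrix.of e) * (Matrix.of e)ᵀ = 1 := by
    ext i j
    rw [Matrix.mul_apply, Matrix.one_apply, ← hON i j, dotProduct]
    simp [Matrix.transpose_apply]
  have hU2 : (Matrix.of e)ᵀ * (Matrix.of e) = 1 := mul_eq_one_comm.mp hU
  ext a b
  rw [Matrix.sum_apply, ← hU2, Matrix.mul_apply]
  simp [vecMulVec_apply, Matrix.transpose_apply]

open Finset in
private lemma pow_eq' {n : ℕ} {Ψ : Matrix (Fin n) (Fin n) ℝ} {lam : Fin n → ℝ}
    {P : Fin n → Matrix (Fin n) (Fin n) ℝ}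
    (hPP : ∀ i j, P i * P j = if i = j then P i else 0)
    (hP1 : (∑ i, P i) = 1)
    (hspec : Ψ = ∑ i, lam i • P i) (m : ℕ) :
    (-Ψ) ^ m = ∑ i, ((-lam i) ^ m) • P i := by
  have hA : -Ψ = ∑ j, (-lam j) • P j := by
    rw [hspec, ← Finset.sum_neg_distrib]
    exact Finset.sum_congr rfl fun j _ => (neg_smul _ _).symm
  induction m with
  | zero => simpa using hP1.symm
  | succ m ih =>
    rw [pow_succ, ih, hA]
    calc (∑ i, ((-lam i) ^ m) • P i) * (∑ j, (-lam j) • P j)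
        = ∑ i, ∑ j, (((-lam i) ^ m) * (-lam j)) • (P i * P j) := by
          rw [Finset.sum_mul]
          refine Finset.sum_congr rfl fun i _ => ?_
          rw [Finset.mul_sum]
          refine Finset.sum_congr rfl fun j _ => ?_
          rw [smul_mul_assoc, mul_smul_comm, smul_smul]
      _ = ∑ i, ((-lam i) ^ (m + 1)) • P i := by
          refine Finset.sum_congr rfl fun i _ => ?_
          simp only [hPP, smul_ite, smul_zero]
          rw [Finset.sum_ite_eq, if_pos (Finset.mem_univ i), pow_succ]

open Finset in
private lemma ARB' {n : ℕ} {Ψ : Matrix (Fin n) (Fin n) ℝ} {lam : Fin n → ℝ}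
    {P : Fin n → Matrix (Fin n) (Fin n) ℝ}
    (hPP : ∀ i j, P i * P j = if i = j then P i else 0)
    (hP1 : (∑ i, P i) = 1)
    (hspec : Ψ = ∑ i, lam i • P i) (R : Matrix (Fin n) (Fin n) ℝ) (a b : ℕ) :
    (-Ψ) ^ a * R * (-Ψ) ^ b
      = ∑ p, ∑ q, ((-lam p) ^ a * (-lam q) ^ b) • (P p * R * P q) := by
  rw [pow_eq' hPP hP1 hspec a, pow_eq' hPP hP1 hspec b, Finset.sum_mul, Finset.sum_mul]
  refine Finset.sum_congr rfl fun p _ => ?_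
  rw [Finset.mul_sum]
  refine Finset.sum_congr rfl fun q _ => ?_
  rw [smul_mul_assoc, smul_mul_assoc, mul_smul_comm, smul_smul]

/-- Fréchet derivative of the matrix exponential at a symmetric matrix:
`d/dε exp(-Ψ + εR)|_{ε=0} = Σ_{i,j} e^{-λ_i/2} e^{-λ_j/2} h(λ_i-λ_j) P_i R P_j`,
with `h x = sinh(x/2)/(x/2)`, `h 0 = 1`, and `(λ i, P i)` the spectral data of
the symmetric matrix `Ψ`. -/
theorem hasDerivAt_exp_neg_psi {n : ℕ} (Ψ R : Matrix (Fin n) (Fin n) ℝ)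
    (hΨ : Ψ.IsSymm) (hR : R.IsSymm)
    (e : Fin n → (Fin n → ℝ)) (lam : Fin n → ℝ)
    (hON : ∀ i j, e i ⬝ᵥ e j = if i = j then 1 else 0)
    (P : Fin n → Matrix (Fin n) (Fin n) ℝ)
    (hP : ∀ i, P i = vecMulVec (e i) (e i))
    (hspec : Ψ = ∑ i, lam i • P i)
    (h : ℝ → ℝ)
    (hh : ∀ x : ℝ, h x = if x = 0 then 1 else Real.sinh (x / 2) / (x / 2)) :
    HasDerivAt (fun ε : ℝ => NormedSpace.exp (-Ψ + ε • R))
      (∑ i, ∑ j,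
        (Real.exp (-lam i / 2) * Real.exp (-lam j / 2) * h (lam i - lam j)) •
          (P i * R * P j)) 0 := by
  classical
  have hPP : ∀ i j, P i * P j = if i = j then P i else 0 := by
    intro i j
    rw [hP i, hP j, Pmul' hON i j, ← hP i]
  have hP1 : (∑ i, P i) = 1 := by
    rw [Finset.sum_congr rfl fun i _ => hP i]
    exact Psum' hON
  -- setup for uniform-limit differentiation
  set C : ℝ := ‖Ψ‖ + ‖R‖ with hCdef
  have hC0 : 0 ≤ C := by positivity
  set M : ℝ → Matrix (Fin n) (Fin n) ℝ := fun ε => -Ψ + ε • R with hMdef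
  have hM0 : M 0 = -Ψ := by simp [hMdef]
  have hMderiv : ∀ ε : ℝ, HasDerivAt M R ε := by
    intro ε
    have := ((hasDerivAt_id ε).smul_const R).const_add (-Ψ)
    rw [one_smul] at this
    exact this
  have hMnorm : ∀ ε ∈ Metric.ball (0 : ℝ) 1, ‖M ε‖ ≤ C := by
    intro ε hε
    have hε1 : |ε| ≤ 1 := le_of_lt (by simpa [Real.dist_eq] using hε)
    calc ‖-Ψ + ε • R‖ ≤ ‖-Ψ‖ + ‖ε • R‖ := norm_add_le _ _
      _ = ‖Ψ‖ + |ε| * ‖R‖ := by rw [norm_neg, norm_smul, Real.norm_eq_abs]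
      _ ≤ ‖Ψ‖ + 1 * ‖R‖ := by
          gcongr
      _ = C := by rw [one_mul]
  -- derivative of powers
  have hDk : ∀ (k : ℕ) (ε : ℝ), HasDerivAt (fun ε : ℝ => (M ε) ^ k)
      (∑ a ∈ Finset.range k, (M ε) ^ a * R * (M ε) ^ (k - 1 - a)) ε := by
    intro k
    induction k with
    | zero =>
      intro ε
      simp only [pow_zero, Finset.range_zero, Finset.sum_empty]
      exact hasDerivAt_const ε 1
    | succ k ih =>
      intro ε
      have hmul : HasDerivAt (fun ε : ℝ => (M ε) ^ k * (M ε)) _ ε := (ih ε).mul (hMderiv ε)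
      have hfun : (fun ε : ℝ => (M ε) ^ k * (M ε)) = fun ε : ℝ => (M ε) ^ (k + 1) := by
        funext x; rw [← pow_succ]
      rw [hfun] at hmul
      have heq : (∑ a ∈ Finset.range (k + 1), (M ε) ^ a * R * (M ε) ^ (k + 1 - 1 - a))
          = (∑ a ∈ Finset.range k, (M ε) ^ a * R * (M ε) ^ (k - 1 - a)) * M ε
            + (M ε) ^ k * R := by
        rw [Finset.sum_range_succ, Finset.sum_mul]
        congr 1
        · refine Finset.sum_congr rfl fun a ha => ?_
          have hak : a < k := Finset.mem_range.mp ha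
          have h2 : k + 1 - 1 - a = (k - 1 - a) + 1 := by omega
          rw [h2, pow_succ, ← mul_assoc]
        · have h3 : k + 1 - 1 - k = 0 := by omega
          rw [h3, pow_zero, mul_one]
      rw [heq]
      exact hmul
  -- the series terms and their derivatives
  set F : ℕ → ℝ → Matrix (Fin n) (Fin n) ℝ :=
    fun k ε => (k.factorial : ℝ)⁻¹ • (M ε) ^ k with hFdef
  set F' : ℕ → ℝ → Matrix (Fin n) (Fin n) ℝ :=
    fun k ε => (k.factorial : ℝ)⁻¹ • ∑ a ∈ Finset.range k, (M ε) ^ a * R * (M ε) ^ (k - 1 - a)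
    with hF'def
  have hFderiv : ∀ (k : ℕ) (ε : ℝ), HasDerivAt (F k) (F' k ε) ε :=
    fun k ε => by have := (hDk k ε).const_smul ((k.factorial : ℝ)⁻¹); exact this
  -- the uniform bound
  set u : ℕ → ℝ := fun k => (k.factorial : ℝ)⁻¹ * (k * (C ^ (k - 1) * ‖R‖)) with hudef
  have hu : Summable u := by
    rw [← summable_nat_add_iff 1]
    refine ((Real.summable_pow_div_factorial C).mul_right ‖R‖).congr fun k => ?_
    have h1 : (k.factorial : ℝ) ≠ 0 := Nat.cast_ne_zero.2 (Nat.factorial_ne_zero k)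
    have h2 : ((k : ℝ) + 1) ≠ 0 := by positivity
    simp only [hudef]
    rw [Nat.factorial_succ]
    push_cast
    field_simp
  have hbound : ∀ (k : ℕ), ∀ ε ∈ Metric.ball (0 : ℝ) 1, ‖F' k ε‖ ≤ u k := by
    intro k ε hε
    have hXC := hMnorm ε hε
    have hleft : ∀ (m : ℕ) (Y : Matrix (Fin n) (Fin n) ℝ), ‖(M ε) ^ m * Y‖ ≤ C ^ m * ‖Y‖ := by
      intro m Y
      cases m with
      | zero => simp
      | succ m =>
        calc ‖(M ε) ^ (m + 1) * Y‖ ≤ ‖(M ε) ^ (m + 1)‖ * ‖Y‖ := norm_mul_le _ _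
          _ ≤ ‖M ε‖ ^ (m + 1) * ‖Y‖ := by
              gcongr
              exact norm_pow_le' _ (Nat.succ_pos m)
          _ ≤ C ^ (m + 1) * ‖Y‖ := by gcongr
    have hright : ∀ (m : ℕ), ‖R * (M ε) ^ m‖ ≤ ‖R‖ * C ^ m := by
      intro m
      cases m with
      | zero => simp
      | succ m =>
        calc ‖R * (M ε) ^ (m + 1)‖ ≤ ‖R‖ * ‖(M ε) ^ (m + 1)‖ := norm_mul_le _ _
          _ ≤ ‖R‖ * ‖M ε‖ ^ (m + 1) := by
              gcongr
              exact norm_pow_le' _ (Nat.succ_pos m)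
          _ ≤ ‖R‖ * C ^ (m + 1) := by gcongr
    have hterm : ∀ a ∈ Finset.range k,
        ‖(M ε) ^ a * R * (M ε) ^ (k - 1 - a)‖ ≤ C ^ (k - 1) * ‖R‖ := by
      intro a ha
      have hak : a < k := Finset.mem_range.mp ha
      calc ‖(M ε) ^ a * R * (M ε) ^ (k - 1 - a)‖
          = ‖(M ε) ^ a * (R * (M ε) ^ (k - 1 - a))‖ := by rw [mul_assoc]
        _ ≤ C ^ a * ‖R * (M ε) ^ (k - 1 - a)‖ := hleft _ _
        _ ≤ C ^ a * (‖R‖ * C ^ (k - 1 - a)) := by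
            gcongr
            exact hright _
        _ = C ^ (a + (k - 1 - a)) * ‖R‖ := by rw [pow_add]; ring
        _ = C ^ (k - 1) * ‖R‖ := by congr 2; omega
    calc ‖F' k ε‖
        = (k.factorial : ℝ)⁻¹ * ‖∑ a ∈ Finset.range k, (M ε) ^ a * R * (M ε) ^ (k - 1 - a)‖ := by
          rw [hF'def, norm_smul, Real.norm_eq_abs, abs_of_nonneg (by positivity)]
      _ ≤ (k.factorial : ℝ)⁻¹ * ∑ a ∈ Finset.range k, ‖(M ε) ^ a * R * (M ε) ^ (k - 1 - a)‖ := by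
          gcongr
          exact norm_sum_le _ _
      _ ≤ (k.factorial : ℝ)⁻¹ * ∑ _a ∈ Finset.range k, C ^ (k - 1) * ‖R‖ := by
          gcongr with a ha
          exact hterm a ha
      _ = u k := by
          rw [Finset.sum_const, Finset.card_range, nsmul_eq_mul, hudef]
  -- uniform-limit differentiation
  have hunif : TendstoUniformlyOn (fun (N : ℕ) (ε : ℝ) => ∑ k ∈ Finset.range N, F' k ε)
      (fun ε => ∑' k : ℕ, F' k ε) Filter.atTop (Metric.ball (0 : ℝ) 1) :=
    tendstoUniformlyOn_tsum_nat hu hbound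
  have hptwise : ∀ ε ∈ Metric.ball (0 : ℝ) 1,
      Filter.Tendsto (fun N : ℕ => ∑ k ∈ Finset.range N, F k ε) Filter.atTop
        (nhds (NormedSpace.exp (M ε))) := by
    intro ε _
    have hs := (NormedSpace.expSeries_summable' (𝕂 := ℝ) (M ε)).hasSum
    rw [NormedSpace.exp_eq_tsum (𝕂 := ℝ)]
    exact hs.tendsto_sum_nat
  have hmain := hasDerivAt_of_tendstoUniformlyOn Metric.isOpen_ball hunif
    (Filter.Eventually.of_forall fun N ε hε =>
      HasDerivAt.fun_sum fun k _ => hFderiv k ε)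
    hptwise (show (0 : ℝ) ∈ Metric.ball (0 : ℝ) 1 by simp)
  -- identify the derivative
  have hkey : (∑' k : ℕ, F' k 0)
      = ∑ i, ∑ j,
        (Real.exp (-lam i / 2) * Real.exp (-lam j / 2) * h (lam i - lam j)) •
          (P i * R * P j) := by
    have hF'0 : ∀ k : ℕ, F' k 0 = ∑ p, ∑ q,
        ((k.factorial : ℝ)⁻¹ * ∑ a ∈ Finset.range k, (-lam p) ^ a * (-lam q) ^ (k - 1 - a)) •
          (P p * R * P q) := by
      intro k
      rw [hF'def]
      simp only [hM0]
      rw [Finset.sum_congr rfl fun a _ => ARB' hPP hP1 hspec R a (k - 1 - a)]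
      rw [Finset.sum_comm]
      rw [Finset.smul_sum]
      refine Finset.sum_congr rfl fun p _ => ?_
      rw [Finset.sum_comm, Finset.smul_sum]
      refine Finset.sum_congr rfl fun q _ => ?_
      rw [← Finset.sum_smul, smul_smul, Finset.mul_sum]
    have hsumm : ∀ p q : Fin n, Summable (fun k : ℕ =>
        ((k.factorial : ℝ)⁻¹ * ∑ a ∈ Finset.range k, (-lam p) ^ a * (-lam q) ^ (k - 1 - a)) •
          (P p * R * P q)) :=
      fun p q => (phi_summable' (-lam p) (-lam q)).smul_const _
    calc (∑' k : ℕ, F' k 0)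
        = ∑' k : ℕ, ∑ p, ∑ q,
            ((k.factorial : ℝ)⁻¹ * ∑ a ∈ Finset.range k, (-lam p) ^ a * (-lam q) ^ (k - 1 - a)) •
              (P p * R * P q) := tsum_congr hF'0
      _ = ∑ p, ∑ q, (∑' k : ℕ,
            (k.factorial : ℝ)⁻¹ * ∑ a ∈ Finset.range k, (-lam p) ^ a * (-lam q) ^ (k - 1 - a)) •
              (P p * R * P q) := by
          rw [Summable.tsum_finsetSum fun p _ => summable_sum fun q _ => hsumm p q]
          refine Finset.sum_congr rfl fun p _ => ?_
          rw [Summable.tsum_finsetSum fun q _ => hsumm p q]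
          refine Finset.sum_congr rfl fun q _ => ?_
          exact Summable.tsum_smul_const (phi_summable' (-lam p) (-lam q)) _
      _ = ∑ i, ∑ j,
            (Real.exp (-lam i / 2) * Real.exp (-lam j / 2) * h (lam i - lam j)) •
              (P i * R * P j) := by
          refine Finset.sum_congr rfl fun p _ => Finset.sum_congr rfl fun q _ => ?_
          congr 1
          rw [phi_tsum' (-lam p) (-lam q)]
          exact coeff_eq' (lam p) (lam q) h hh
  rw [← hkey]
  exact hmain
end

section
/- Suppose Ψ: [0,T] → (real symmetric d×d matrices) is differentiable and satisfies dΨ/dt = -α₁(1 - g(Ψ)exp(-Ψ)) + α₂F(Ψ,E) + α₃(WΨ - ΨW) pointwise, where g(Ψ) = d/tr(exp(-Ψ)), tr(E) = 0, W is antisymmetric, and F(Ψ,E) = Σ_{i,j} f(λ_i-λ_j) P_i E P_j with f(0)=2. Then tr(Ψ(t)) is constant in t; equivalently det(exp(Ψ(t))) is constant. -/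
open Matrix

attribute [local instance] Matrix.frobeniusNormedAddCommGroup Matrix.frobeniusNormedSpace

lemma aux_OOt {d : ℕ} (e : Fin d → Fin d → ℝ)
    (hON : ∀ i j, e i ⬝ᵥ e j = if i = j then 1 else 0) :
    (Matrix.of e) * (Matrix.of e)ᵀ = 1 := by
  ext i j
  simpa [Matrix.mul_apply, Matrix.one_apply, dotProduct] using hON i j

lemma aux_OtO {d : ℕ} (e : Fin d → Fin d → ℝ)
    (hON : ∀ i j, e i ⬝ᵥ e j = if i = j then 1 else 0) :
    (Matrix.of e)ᵀ * (Matrix.of e) = 1 :=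
  mul_eq_one_comm.mp (aux_OOt e hON)

lemma aux_sumP {d : ℕ} (e : Fin d → Fin d → ℝ)
    (hON : ∀ i j, e i ⬝ᵥ e j = if i = j then 1 else 0) :
    ∑ i, vecMulVec (e i) (e i) = 1 := by
  have h := aux_OtO e hON
  ext j k
  have := congrFun (congrFun h j) k
  rw [Matrix.sum_apply, ← this]
  simp [Matrix.mul_apply, vecMulVec_apply, mul_comm]

lemma aux_vmv_mul {d : ℕ} (a b c e' : Fin d → ℝ) :
    vecMulVec a b * vecMulVec c e' = (b ⬝ᵥ c) • vecMulVec a e' := by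
  ext i j
  simp [Matrix.mul_apply, vecMulVec_apply, dotProduct, Finset.mul_sum, Finset.sum_mul]
  ring_nf
  congr 1; ext k; ring

lemma aux_conj {d : ℕ} (e : Fin d → Fin d → ℝ) (lam : Fin d → ℝ) :
    (Matrix.of e)ᵀ * Matrix.diagonal lam * Matrix.of e
      = ∑ i, lam i • vecMulVec (e i) (e i) := by
  ext j k
  simp [Matrix.mul_apply, Matrix.diagonal, vecMulVec_apply, Matrix.sum_apply,
    Finset.sum_mul, ite_mul, Matrix.smul_apply, smul_eq_mul]
  exact Finset.sum_congr rfl fun i _ => by ring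

/-- exp of a conjugated diagonal matrix. -/
lemma aux_exp_conj {d : ℕ} (e : Fin d → Fin d → ℝ)
    (hON : ∀ i j, e i ⬝ᵥ e j = if i = j then 1 else 0) (lam : Fin d → ℝ) :
    NormedSpace.exp ((Matrix.of e)ᵀ * Matrix.diagonal lam * Matrix.of e)
      = (Matrix.of e)ᵀ * Matrix.diagonal (fun i => Real.exp (lam i)) * Matrix.of e := by
  let U : (Matrix (Fin d) (Fin d) ℝ)ˣ :=
    ⟨Matrix.of e, (Matrix.of e)ᵀ, aux_OOt e hON, aux_OtO e hON⟩
  have h1 : ((U⁻¹ : (Matrix (Fin d) (Fin d) ℝ)ˣ) : Matrix (Fin d) (Fin d) ℝ)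
      = (Matrix.of e)ᵀ := rfl
  have h := Matrix.exp_units_conj' U (Matrix.diagonal lam)
  rw [h1] at h
  rw [h, Matrix.exp_diagonal]
  simp [Pi.exp_def, ← Real.exp_eq_exp_ℝ]
  rfl

/-- Volume conservation for the log-morphology equation: if
`dΨ/dt = -α₁(1 - g(Ψ)exp(-Ψ)) + α₂ F(Ψ,E) + α₃(WΨ - ΨW)` on `[0,T]`, with
`g(Ψ) = d / tr (exp (-Ψ))`, `tr E = 0`, `W` antisymmetric and
`F(Ψ,E) = Σ_{i,j} f(λ_i - λ_j) P_i E P_j` with `f 0 = 2`, then `tr (Ψ t)` is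
constant in `t` (equivalently `det (exp (Ψ t))` is constant). -/
theorem trace_psi_constant {d : ℕ} (hd : 0 < d) (T : ℝ) (hT : 0 ≤ T)
    (α₁ α₂ α₃ : ℝ)
    (E W : Matrix (Fin d) (Fin d) ℝ) (hE : E.IsSymm) (hEtr : E.trace = 0)
    (hW : Wᵀ = -W)
    (Ψ : ℝ → Matrix (Fin d) (Fin d) ℝ) (hsymm : ∀ t, (Ψ t).IsSymm)
    (e : ℝ → Fin d → (Fin d → ℝ)) (lam : ℝ → Fin d → ℝ)
    (hON : ∀ t, ∀ i j, e t i ⬝ᵥ e t j = if i = j then 1 else 0)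
    (P : ℝ → Fin d → Matrix (Fin d) (Fin d) ℝ)
    (hP : ∀ t i, P t i = vecMulVec (e t i) (e t i))
    (hspec : ∀ t, Ψ t = ∑ i, lam t i • P t i)
    (f : ℝ → ℝ) (hf0 : f 0 = 2)
    (hode : ∀ t ∈ Set.Icc 0 T,
      HasDerivWithinAt Ψ
        (-(α₁ • ((1 : Matrix (Fin d) (Fin d) ℝ) -
            ((d : ℝ) / (NormedSpace.exp (-Ψ t)).trace) •
              NormedSpace.exp (-Ψ t))) +
          α₂ • (∑ i, ∑ j, f (lam t i - lam t j) • (P t i * E * P t j)) +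
          α₃ • (W * Ψ t - Ψ t * W))
        (Set.Icc 0 T) t) :
    (∀ t ∈ Set.Icc 0 T, (Ψ t).trace = (Ψ 0).trace) ∧
    (∀ t ∈ Set.Icc 0 T,
      (NormedSpace.exp (Ψ t)).det = (NormedSpace.exp (Ψ 0)).det) := by
  -- spectral form
  have hPsiEq : ∀ t, Ψ t = (Matrix.of (e t))ᵀ * Matrix.diagonal (lam t) * Matrix.of (e t) := by
    intro t
    rw [hspec t, aux_conj (e t) (lam t)]
    exact Finset.sum_congr rfl fun i _ => by rw [hP]
  have hexpPsi : ∀ t, NormedSpace.exp (Ψ t)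
      = (Matrix.of (e t))ᵀ * Matrix.diagonal (fun i => Real.exp (lam t i)) * Matrix.of (e t) := by
    intro t; rw [hPsiEq t, aux_exp_conj (e t) (hON t)]
  have hnegPsi : ∀ t, -Ψ t
      = (Matrix.of (e t))ᵀ * Matrix.diagonal (fun i => -lam t i) * Matrix.of (e t) := by
    intro t
    have h : Matrix.diagonal (fun i => -lam t i) = -Matrix.diagonal (lam t) := by
      ext i j; by_cases hij : i = j <;> simp [Matrix.diagonal, hij]
    rw [hPsiEq t, h, Matrix.mul_neg, Matrix.neg_mul]
  have hexpNeg : ∀ t, NormedSpace.exp (-Ψ t)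
      = (Matrix.of (e t))ᵀ * Matrix.diagonal (fun i => Real.exp (-lam t i)) * Matrix.of (e t) := by
    intro t; rw [hnegPsi t, aux_exp_conj (e t) (hON t)]
  have htrconj : ∀ (t : ℝ) (v : Fin d → ℝ),
      ((Matrix.of (e t))ᵀ * Matrix.diagonal v * Matrix.of (e t)).trace = ∑ i, v i := by
    intro t v
    rw [Matrix.trace_mul_cycle, aux_OOt (e t) (hON t), Matrix.one_mul,
      Matrix.trace_diagonal]
  have hS : ∀ t, (NormedSpace.exp (-Ψ t)).trace ≠ 0 := by
    intro t
    rw [hexpNeg t, htrconj t]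
    have : (0:ℝ) < ∑ i, Real.exp (-lam t i) :=
      Finset.sum_pos (fun i _ => Real.exp_pos _) ⟨⟨0, hd⟩, Finset.mem_univ _⟩
    exact ne_of_gt this
  -- the trace of the right-hand side vanishes
  have hkey : ∀ t ∈ Set.Icc 0 T,
      HasDerivWithinAt (fun s => (Ψ s).trace) 0 (Set.Icc 0 T) t := by
    intro t ht
    have h1 : ((1 : Matrix (Fin d) (Fin d) ℝ) -
        ((d : ℝ) / (NormedSpace.exp (-Ψ t)).trace) • NormedSpace.exp (-Ψ t)).trace = 0 := by
      rw [Matrix.trace_sub, Matrix.trace_smul, Matrix.trace_one, smul_eq_mul,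
        div_mul_cancel₀ _ (hS t)]
      simp
    have hPP : ∀ i j : Fin d, P t j * P t i = if j = i then P t i else 0 := by
      intro i j
      rw [hP, hP, aux_vmv_mul, hON]
      by_cases h : j = i
      · subst h; simp [hP]
      · simp [h]
    have hterm : ∀ i j : Fin d,
        (P t i * E * P t j).trace = if i = j then (P t i * E).trace else 0 := by
      intro i j
      rw [Matrix.trace_mul_comm, ← Matrix.mul_assoc, hPP i j]
      by_cases h : i = j
      · subst h; simp
      · rw [if_neg (fun hji : j = i => h hji.symm), Matrix.zero_mul, Matrix.trace_zero, if_neg h]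
    have hsum : ∑ i, (P t i * E).trace = E.trace := by
      rw [← Matrix.trace_sum, ← Finset.sum_mul]
      have : ∑ i, P t i = 1 := by
        rw [show (∑ i, P t i) = ∑ i, vecMulVec (e t i) (e t i) from
          Finset.sum_congr rfl fun i _ => hP t i]
        exact aux_sumP (e t) (hON t)
      rw [this, Matrix.one_mul]
    have h2 : (∑ i, ∑ j, f (lam t i - lam t j) • (P t i * E * P t j)).trace = 0 := by
      rw [Matrix.trace_sum]
      have : ∀ i : Fin d, (∑ j, f (lam t i - lam t j) • (P t i * E * P t j)).trace
          = 2 * (P t i * E).trace := by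
        intro i
        rw [Matrix.trace_sum]
        have : ∀ j : Fin d, (f (lam t i - lam t j) • (P t i * E * P t j)).trace
            = if i = j then 2 * (P t i * E).trace else 0 := by
          intro j
          rw [Matrix.trace_smul, hterm i j, smul_eq_mul]
          by_cases h : i = j
          · subst h; simp [hf0]
          · simp [h]
        rw [Finset.sum_congr rfl fun j _ => this j, Finset.sum_ite_eq]
        simp
      rw [Finset.sum_congr rfl fun i _ => this i, ← Finset.mul_sum, hsum, hEtr, mul_zero]
    have h3 : (W * Ψ t - Ψ t * W).trace = 0 := by
      rw [Matrix.trace_sub, Matrix.trace_mul_comm, sub_self]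
    have hzero : (-(α₁ • ((1 : Matrix (Fin d) (Fin d) ℝ) -
            ((d : ℝ) / (NormedSpace.exp (-Ψ t)).trace) • NormedSpace.exp (-Ψ t))) +
          α₂ • (∑ i, ∑ j, f (lam t i - lam t j) • (P t i * E * P t j)) +
          α₃ • (W * Ψ t - Ψ t * W)).trace = 0 := by
      rw [Matrix.trace_add, Matrix.trace_add, Matrix.trace_neg, Matrix.trace_smul,
        Matrix.trace_smul, Matrix.trace_smul, h1, h2, h3]
      simp
    let L := (Matrix.traceLinearMap (Fin d) ℝ ℝ).toContinuousLinearMap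
    have hderiv := L.hasFDerivAt.comp_hasDerivWithinAt t (hode t ht)
    have hLz : L (-(α₁ • ((1 : Matrix (Fin d) (Fin d) ℝ) -
            ((d : ℝ) / (NormedSpace.exp (-Ψ t)).trace) • NormedSpace.exp (-Ψ t))) +
          α₂ • (∑ i, ∑ j, f (lam t i - lam t j) • (P t i * E * P t j)) +
          α₃ • (W * Ψ t - Ψ t * W)) = 0 := hzero
    replace hderiv := hderiv.congr_deriv hLz
    exact hderiv
  have hconst : ∀ t ∈ Set.Icc 0 T, (Ψ t).trace = (Ψ 0).trace := by
    intro t ht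
    have h0 : (0:ℝ) ∈ Set.Icc 0 T := ⟨le_refl _, hT⟩
    have hle := (convex_Icc (0:ℝ) T).norm_image_sub_le_of_norm_hasDerivWithin_le
      (C := 0) (f' := fun _ => (0:ℝ)) (fun x hx => hkey x hx)
      (fun x _ => le_of_eq norm_zero) h0 ht
    have : ‖(Ψ t).trace - (Ψ 0).trace‖ ≤ 0 := by simpa using hle
    have := le_antisymm this (norm_nonneg _)
    rw [Real.norm_eq_abs, abs_eq_zero, sub_eq_zero] at this
    exact this
  refine ⟨hconst, fun t ht => ?_⟩
  have hdet : ∀ t, (NormedSpace.exp (Ψ t)).det = Real.exp ((Ψ t).trace) := by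
    intro t
    have htr : (Ψ t).trace = ∑ i, lam t i := by
      rw [hPsiEq t, htrconj t]
    have h1 : (Matrix.of (e t))ᵀ.det * (Matrix.of (e t)).det = 1 := by
      rw [← Matrix.det_mul, aux_OtO (e t) (hON t), Matrix.det_one]
    rw [hexpPsi t, Matrix.det_mul, Matrix.det_mul, Matrix.det_diagonal, htr, Real.exp_sum]
    linear_combination (∏ i, Real.exp (lam t i)) * h1
  rw [hdet t, hdet 0, hconst t ht]
end

section
/- For a real symmetric matrix Ψ with eigenvalues λ_i and spectral projectors P_i, and symmetric matrices R and E with tr(E) = 0, the matrix L_{α2}(Ψ,R,E) := Σ_{i,j,k} ((f(λ_i-λ_k) - f(λ_j-λ_k))/(λ_i-λ_j)) · [P_i R P_j E P_k + P_k E P_j R P_i] is symmetric and traceless, where the quotient is interpreted as f'(λ_i-λ_k) when λ_i = λ_j and f(x)=x/tanh(x/2), f(0)=2. -/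
open Matrix

/-- The VMS linearization term
`L_{α2}(Ψ,R,E) = Σ_{i,j,k} ((f(λ_i-λ_k) - f(λ_j-λ_k))/(λ_i-λ_j)) ·
  (P_i R P_j E P_k + P_k E P_j R P_i)`
is symmetric and traceless, where the divided-difference coefficient is
interpreted as `f'(λ_i-λ_k)` when `λ_i = λ_j`, and
`f x = x / tanh (x/2)` with `f 0 = 2`. -/
theorem L_alpha2_isSymm_traceless {n : ℕ} (Ψ R E : Matrix (Fin n) (Fin n) ℝ)
    (hΨ : Ψ.IsSymm) (hR : R.IsSymm) (hE : E.IsSymm) (hEtr : E.trace = 0)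
    (e : Fin n → (Fin n → ℝ)) (lam : Fin n → ℝ)
    (hON : ∀ i j, e i ⬝ᵥ e j = if i = j then 1 else 0)
    (P : Fin n → Matrix (Fin n) (Fin n) ℝ)
    (hP : ∀ i, P i = vecMulVec (e i) (e i))
    (hspec : Ψ = ∑ i, lam i • P i)
    (f : ℝ → ℝ)
    (hf : ∀ x : ℝ, f x = if x = 0 then 2 else x / Real.tanh (x / 2))
    (c : Fin n → Fin n → Fin n → ℝ)
    (hc : ∀ i j k, c i j k =
      if lam i = lam j then deriv f (lam i - lam k)
      else (f (lam i - lam k) - f (lam j - lam k)) / (lam i - lam j))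
    (L : Matrix (Fin n) (Fin n) ℝ)
    (hL : L = ∑ i, ∑ j, ∑ k,
        c i j k • (P i * R * P j * E * P k + P k * E * P j * R * P i)) :
    L.IsSymm ∧ L.trace = 0 := by
  have hfeven : ∀ x : ℝ, f (-x) = f x := by
    intro x
    rcases eq_or_ne x 0 with h | h
    · simp [h]
    · rw [hf, hf, if_neg h, if_neg (neg_ne_zero.mpr h)]
      rw [show (-x)/2 = -(x/2) by ring, Real.tanh_neg, neg_div_neg_eq]
  have hderiv0 : deriv f 0 = 0 := by
    have h1 : (fun x : ℝ => f (-x)) = f := funext hfeven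
    have h2 := deriv_comp_neg (f := f) (x := (0:ℝ))
    rw [h1, neg_zero] at h2
    linarith
  have hcsum : ∀ i j, c i j i + c j i j = 0 := by
    intro i j
    rcases eq_or_ne (lam i) (lam j) with h | h
    · rw [hc, hc, if_pos h, if_pos h.symm, sub_self, sub_self, hderiv0]
      norm_num
    · rw [hc, hc, if_neg h, if_neg (Ne.symm h), sub_self, sub_self]
      have hd : lam i - lam j ≠ 0 := sub_ne_zero.mpr h
      have hd' : lam j - lam i ≠ 0 := sub_ne_zero.mpr (Ne.symm h)
      have heq : f (lam j - lam i) = f (lam i - lam j) := by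
        rw [← hfeven (lam i - lam j), neg_sub]
      rw [heq, div_add_div _ _ hd hd', div_eq_zero_iff]
      left; ring
  have hPt : ∀ i, (P i)ᵀ = P i := by
    intro i; rw [hP]; ext a b; simp [vecMulVec_apply, transpose_apply, mul_comm]
  have hRt : Rᵀ = R := hR
  have hEt : Eᵀ = E := hE
  constructor
  · rw [Matrix.IsSymm, hL]
    simp only [Matrix.transpose_sum, transpose_smul, transpose_add, transpose_mul,
      hPt, hRt, hEt, Matrix.mul_assoc]
    refine Finset.sum_congr rfl fun i _ => Finset.sum_congr rfl fun j _ =>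
      Finset.sum_congr rfl fun k _ => ?_
    rw [add_comm]
  · -- structural lemmas
    have hvmm : ∀ (u v : Fin n → ℝ) (M : Matrix (Fin n) (Fin n) ℝ),
        vecMulVec u v * M = vecMulVec u (v ᵥ* M) := by
      intro u v M; ext a b
      simp [mul_apply, vecMulVec_apply, vecMul, dotProduct, Finset.mul_sum, mul_assoc]
    have htr : ∀ u v : Fin n → ℝ, (vecMulVec u v).trace = u ⬝ᵥ v := by
      intro u v; simp [Matrix.trace, Matrix.diag, vecMulVec_apply, dotProduct]
    have hvv : ∀ (u v w z : Fin n → ℝ),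
        vecMulVec u v * vecMulVec w z = (v ⬝ᵥ w) • vecMulVec u z := by
      intro u v w z; ext a b
      simp only [mul_apply, vecMulVec_apply, Matrix.smul_apply, smul_eq_mul, dotProduct,
        Finset.sum_mul, Finset.mul_sum]
      apply Finset.sum_congr rfl; intro x _; ring
    -- trace of each term
    set r : Fin n → Fin n → ℝ := fun i j => (e i ᵥ* R) ⬝ᵥ e j with hr
    set s : Fin n → Fin n → ℝ := fun i j => (e i ᵥ* E) ⬝ᵥ e j with hs
    have htr1 : ∀ i j k, (P i * R * P j * E * P k).trace =
        (if i = k then (1:ℝ) else 0) * (r i j * s j k) := by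
      intro i j k
      rw [hP, hP, hP, hvmm, hvv, Matrix.smul_mul, Matrix.smul_mul, hvmm, hvv,
        trace_smul, trace_smul, htr, hON, smul_eq_mul, smul_eq_mul]
      ring
    have htr2 : ∀ i j k, (P k * E * P j * R * P i).trace =
        (if k = i then (1:ℝ) else 0) * (s k j * r j i) := by
      intro i j k
      rw [hP, hP, hP, hvmm, hvv, Matrix.smul_mul, Matrix.smul_mul, hvmm, hvv,
        trace_smul, trace_smul, htr, hON, smul_eq_mul, smul_eq_mul]
      ring
    -- symmetry of r and s
    have entry : ∀ (M : Matrix (Fin n) (Fin n) ℝ) (i j : Fin n),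
        (e i ᵥ* M) ⬝ᵥ e j = ∑ a, ∑ b, e i a * M a b * e j b := by
      intro M i j
      simp only [vecMul, dotProduct, Finset.sum_mul]
      rw [Finset.sum_comm]
    have hrsymm : ∀ i j, r i j = r j i := by
      intro i j
      simp only [hr]
      rw [entry, entry, Finset.sum_comm]
      refine Finset.sum_congr rfl fun a _ => Finset.sum_congr rfl fun b _ => ?_
      rw [hR.apply a b]; ring
    have hssymm : ∀ i j, s i j = s j i := by
      intro i j
      simp only [hs]
      rw [entry, entry, Finset.sum_comm]
      refine Finset.sum_congr rfl fun a _ => Finset.sum_congr rfl fun b _ => ?_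
      rw [hE.apply a b]; ring
    rw [hL]
    simp only [Matrix.trace_sum, trace_smul, trace_add, smul_eq_mul]
    have step : ∀ i j : Fin n, ∑ k, c i j k * ((P i * R * P j * E * P k).trace
        + (P k * E * P j * R * P i).trace) = c i j i * (2 * (r i j * s j i)) := by
      intro i j
      rw [Finset.sum_eq_single i]
      · rw [htr1, htr2, if_pos rfl, hssymm i j, hrsymm j i]
        ring
      · intro k _ hk
        rw [htr1, htr2, if_neg (Ne.symm hk), if_neg hk]
        ring
      · intro h; exact absurd (Finset.mem_univ i) h
    calc (∑ i, ∑ j, ∑ k, c i j k * ((P i * R * P j * E * P k).trace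
          + (P k * E * P j * R * P i).trace))
        = ∑ i, ∑ j, c i j i * (2 * (r i j * s j i)) := by
          exact Finset.sum_congr rfl fun i _ => Finset.sum_congr rfl fun j _ => step i j
      _ = 0 := by
          have hneg : ∀ i j : Fin n, c j i j * (2 * (r j i * s i j))
              = -(c i j i * (2 * (r i j * s j i))) := by
            intro i j
            have h1 : c j i j = -c i j i := by linarith [hcsum i j]
            rw [hrsymm j i, hssymm i j, h1]; ring
          have h3 : (∑ i, ∑ j, c i j i * (2 * (r i j * s j i)))
              = -∑ i, ∑ j, c i j i * (2 * (r i j * s j i)) := by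
            calc (∑ i, ∑ j, c i j i * (2 * (r i j * s j i)))
                = ∑ i, ∑ j, c j i j * (2 * (r j i * s i j)) := Finset.sum_comm
              _ = ∑ i, ∑ j, -(c i j i * (2 * (r i j * s j i))) :=
                  Finset.sum_congr rfl fun i _ => Finset.sum_congr rfl fun j _ => hneg i j
              _ = -∑ i, ∑ j, c i j i * (2 * (r i j * s j i)) := by
                  simp [Finset.sum_neg_distrib]
          linarith
end
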